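/- If T is a finite tree that is not a path, then the metric dimension of T equals the number of leaves of T minus the number of exterior major vertices of T, i.e., dim(T) = n₁(T) − ex(T). -/

import Mathlib

open SimpleGraph

variable {V : Type*}

/-- Distance from a vertex to a set of vertices: `min_{u ∈ P} d(v,u)`. -/
noncomputable def distSet (G : SimpleGraph V) (v : V) (P : Set V) : ℕ :=
  sInf ((G.dist v) '' P)

/-- An ordered partition of `V` into `t` (nonempty) classes, encoded by a surjective
map `c : V → Fin t`, is resolving if distinct vertices have distinct partition
representations, i.e. distinct vectors of distances to the classes. -/
def IsResolvingPartition (G : SimpleGraph V) {t : ℕ} (c : V → Fin t) : Prop :=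
  Function.Surjective c ∧
    ∀ u v : V, (∀ i : Fin t, distSet G u {x | c x = i} = distSet G v {x | c x = i}) → u = v

/-- The partition dimension: the least `t` admitting a resolving partition into `t` classes. -/
noncomputable def partitionDim (G : SimpleGraph V) : ℕ :=
  sInf {t : ℕ | ∃ c : V → Fin t, IsResolvingPartition G c}

/-- A set `S` is a resolving set if distinct vertices have distinct vectors of
distances to the elements of `S`. -/
def IsResolvingSet (G : SimpleGraph V) (S : Set V) : Prop :=
  ∀ u v : V, (∀ w ∈ S, G.dist u w = G.dist v w) → u = v

/-- The metric dimension: the least cardinality of a resolving set. -/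
noncomputable def metricDim (G : SimpleGraph V) : ℕ :=
  sInf {k : ℕ | ∃ S : Set V, S.ncard = k ∧ IsResolvingSet G S}

/-- A leaf is a vertex of degree one. -/
def IsLeaf (G : SimpleGraph V) (v : V) : Prop := (G.neighborSet v).ncard = 1

/-- A major vertex is a vertex of degree at least three. -/
def IsMajor (G : SimpleGraph V) (v : V) : Prop := 3 ≤ (G.neighborSet v).ncard

/-- A path graph: a tree in which every vertex has degree at most two. -/
def IsPathGraph (G : SimpleGraph V) : Prop :=
  G.IsTree ∧ ∀ v : V, (G.neighborSet v).ncard ≤ 2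

/-- `u` is a terminal vertex of the major vertex `v` if `u` is a leaf and
`d(u,v) < d(u,w)` for every other major vertex `w`. -/
def IsTerminalOf (G : SimpleGraph V) (u v : V) : Prop :=
  IsLeaf G u ∧ IsMajor G v ∧ ∀ w : V, IsMajor G w → w ≠ v → G.dist u v < G.dist u w

/-- The terminal degree of a vertex: its number of terminal vertices. -/
noncomputable def terminalDegree (G : SimpleGraph V) (v : V) : ℕ :=
  {u | IsTerminalOf G u v}.ncard

/-- An exterior major vertex: a major vertex with positive terminal degree. -/
def IsExteriorMajor (G : SimpleGraph V) (v : V) : Prop :=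
  IsMajor G v ∧ 0 < terminalDegree G v

/-- `n₁(G)`: the number of leaves. -/
noncomputable def numLeaves (G : SimpleGraph V) : ℕ := {v | IsLeaf G v}.ncard

/-- `ex(G)`: the number of exterior major vertices. -/
noncomputable def numExteriorMajor (G : SimpleGraph V) : ℕ := {v | IsExteriorMajor G v}.ncard

/-- A support vertex: a vertex adjacent to a leaf. -/
def IsSupport (G : SimpleGraph V) (v : V) : Prop := ∃ u, G.Adj v u ∧ IsLeaf G u

/-- `ξ(G)`: the number of support vertices. -/
noncomputable def numSupport (G : SimpleGraph V) : ℕ := {v | IsSupport G v}.ncard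

/-- `θ(G)`: the maximum number of leaves adjacent to a single support vertex. -/
noncomputable def maxLeavesAtSupport (G : SimpleGraph V) : ℕ :=
  sSup {n : ℕ | ∃ v, IsSupport G v ∧ n = {u | G.Adj v u ∧ IsLeaf G u}.ncard}

set_option linter.unusedSectionVars false
namespace MDimAux

variable {V : Type*} [DecidableEq V] {G : SimpleGraph V}

/-- betweenness in the graph metric -/
def Btw (G : SimpleGraph V) (x y z : V) : Prop :=
  G.dist x y + G.dist y z = G.dist x z

lemma path_length_eq (hT : G.IsTree) {u v : V} (p : G.Walk u v) (hp : p.IsPath) :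
    p.length = G.dist u v := by
  obtain ⟨q, hq, hql⟩ := hT.isConnected.exists_path_of_dist u v
  have := (hT.existsUnique_path u v).unique hp hq
  rw [this, hql]

lemma btw_of_mem_support (hT : G.IsTree) {u v x : V} (p : G.Walk u v) (hp : p.IsPath)
    (hx : x ∈ p.support) : Btw G u x v := by
  unfold Btw
  have h1 : G.dist u x ≤ (p.takeUntil x hx).length := SimpleGraph.dist_le _
  have h2 : G.dist x v ≤ (p.dropUntil x hx).length := SimpleGraph.dist_le _
  have h3 : (p.takeUntil x hx).length + (p.dropUntil x hx).length = p.length := by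
    rw [← SimpleGraph.Walk.length_append, SimpleGraph.Walk.take_spec]
  have h4 := path_length_eq hT p hp
  have h5 := hT.isConnected.dist_triangle (u := u) (v := x) (w := v)
  omega

lemma exists_path_through (hT : G.IsTree) {u v x : V} (h : Btw G u x v) :
    ∀ (p : G.Walk u v), p.IsPath → x ∈ p.support := by
  intro p hp
  obtain ⟨q1, hq1, hl1⟩ := hT.isConnected.exists_path_of_dist u x
  obtain ⟨q2, hq2, hl2⟩ := hT.isConnected.exists_path_of_dist x v
  have hlen : (q1.append q2).length = G.dist u v := by
    rw [SimpleGraph.Walk.length_append, hl1, hl2, h]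
  have hpath : (q1.append q2).IsPath := SimpleGraph.Walk.isPath_of_length_eq_dist _ hlen
  have heq := (hT.existsUnique_path u v).unique hp hpath
  rw [heq]
  rw [SimpleGraph.Walk.mem_support_append_iff]
  left; exact q1.end_mem_support

lemma dist_pos (hT : G.IsTree) {u v : V} (h : u ≠ v) : 0 < G.dist u v :=
  hT.isConnected.pos_dist_of_ne h

lemma eq_of_dist_eq_zero (hT : G.IsTree) {u v : V} (h : G.dist u v = 0) : u = v := by
  by_contra hne
  have := dist_pos hT hne
  omega

lemma btw_comm {x y z : V} (h : Btw G x y z) : Btw G z y x := by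
  unfold Btw at *
  rw [SimpleGraph.dist_comm (u := z) (v := y), SimpleGraph.dist_comm (u := y) (v := x),
    SimpleGraph.dist_comm (u := z) (v := x)]
  omega

lemma btw_left (G : SimpleGraph V) (x z : V) : Btw G x x z := by
  unfold Btw; rw [SimpleGraph.dist_self]; omega

lemma btw_right (G : SimpleGraph V) (x z : V) : Btw G x z z := by
  unfold Btw; rw [SimpleGraph.dist_self]; omega

/-- uniqueness of the point at a given distance on a geodesic -/
lemma btw_unique (hT : G.IsTree) {u v x y : V} (hx : Btw G u x v) (hy : Btw G u y v)
    (hd : G.dist u x = G.dist u y) : x = y := by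
  obtain ⟨p, hp, hpl⟩ := hT.isConnected.exists_path_of_dist u v
  have hxs : x ∈ p.support := exists_path_through hT hx p hp
  have hys : y ∈ p.support := exists_path_through hT hy p hp
  have hsplit := p.take_spec hxs
  have hymem : y ∈ (p.takeUntil x hxs).support ∨ y ∈ (p.dropUntil x hxs).support := by
    have : y ∈ ((p.takeUntil x hxs).append (p.dropUntil x hxs)).support := by
      rw [hsplit]; exact hys
    rw [SimpleGraph.Walk.mem_support_append_iff] at this
    exact this
  rcases hymem with hmem | hmem
  · have hq : (p.takeUntil x hxs).IsPath := hp.takeUntil hxs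
    have h1 : Btw G u y x := btw_of_mem_support hT _ hq hmem
    unfold Btw at h1
    have : G.dist y x = 0 := by omega
    exact (eq_of_dist_eq_zero hT this).symm
  · have hq : (p.dropUntil x hxs).IsPath := hp.dropUntil hxs
    have h1 : Btw G x y v := btw_of_mem_support hT _ hq hmem
    unfold Btw at h1
    unfold Btw at hx hy
    have : G.dist x y = 0 := by omega
    exact eq_of_dist_eq_zero hT this

open Classical in
noncomputable def stp (G : SimpleGraph V) (a b : V) : V :=
  if h : ∃ x, G.Adj a x ∧ G.dist x b + 1 = G.dist a b then h.choose else a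

lemma stp_exists (hT : G.IsTree) {a b : V} (h : a ≠ b) :
    ∃ x, G.Adj a x ∧ G.dist x b + 1 = G.dist a b := by
  obtain ⟨p, hp, hpl⟩ := hT.isConnected.exists_path_of_dist a b
  cases p with
  | nil => exact absurd rfl h
  | @cons _ y _ hadj q =>
    refine ⟨y, hadj, ?_⟩
    have h1 : G.dist y b ≤ q.length := SimpleGraph.dist_le _
    have h2 := hT.isConnected.dist_triangle (u := a) (v := y) (w := b)
    have h3 : G.dist a y = 1 := SimpleGraph.dist_eq_one_iff_adj.mpr hadj
    have h4 : (SimpleGraph.Walk.cons hadj q).length = q.length + 1 := by simp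
    omega

lemma stp_spec (hT : G.IsTree) {a b : V} (h : a ≠ b) :
    G.Adj a (stp G a b) ∧ G.dist (stp G a b) b + 1 = G.dist a b := by
  have he := stp_exists hT h
  classical
  rw [stp]
  split
  · exact (Exists.choose_spec ‹_›)
  · exact absurd he ‹_›

lemma stp_adj (hT : G.IsTree) {a b : V} (h : a ≠ b) : G.Adj a (stp G a b) :=
  (stp_spec hT h).1

lemma stp_dist (hT : G.IsTree) {a b : V} (h : a ≠ b) :
    G.dist (stp G a b) b + 1 = G.dist a b := (stp_spec hT h).2

lemma dist_eq_one_of_adj (hT : G.IsTree) {a b : V} (h : G.Adj a b) : G.dist a b = 1 :=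
  SimpleGraph.dist_eq_one_iff_adj.mpr h



-- uniqueness of the step
lemma stp_unique (hT : G.IsTree) {a b x : V} (h : a ≠ b) (hadj : G.Adj a x)
    (hd : G.dist x b + 1 = G.dist a b) : x = stp G a b := by
  have hs := stp_spec hT h
  have h1 : Btw G a x b := by
    unfold Btw; rw [dist_eq_one_of_adj hT hadj]; omega
  have h2 : Btw G a (stp G a b) b := by
    unfold Btw; rw [dist_eq_one_of_adj hT hs.1]; omega
  exact btw_unique hT h1 h2 (by rw [dist_eq_one_of_adj hT hadj, dist_eq_one_of_adj hT hs.1])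

-- existence of a point at prescribed distance along a geodesic
lemma exists_point_btw (hT : G.IsTree) (a b : V) :
    ∀ i, i ≤ G.dist a b → ∃ x, Btw G a x b ∧ G.dist a x = i := by
  intro i
  induction i with
  | zero => intro _; exact ⟨a, btw_left G a b, SimpleGraph.dist_self⟩
  | succ n ih =>
    intro hn
    obtain ⟨x, hbx, hdx⟩ := ih (by omega)
    have hxb : x ≠ b := by
      intro h; rw [h] at hdx; omega
    obtain ⟨hadj, hd⟩ := stp_spec hT hxb
    refine ⟨stp G x b, ?_, ?_⟩
    · unfold Btw at *
      have t1 := hT.isConnected.dist_triangle (u := a) (v := x) (w := stp G x b)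
      have t2 := hT.isConnected.dist_triangle (u := a) (v := stp G x b) (w := b)
      have e1 := dist_eq_one_of_adj hT hadj
      omega
    · unfold Btw at hbx
      have t1 := hT.isConnected.dist_triangle (u := a) (v := x) (w := stp G x b)
      have t2 := hT.isConnected.dist_triangle (u := a) (v := stp G x b) (w := b)
      have e1 := dist_eq_one_of_adj hT hadj
      omega

-- composition: if x ∈ [a,u] and u ∈ [a,y] then x ∈ [a,y] and u ∈ [x,y]
lemma btw_trans (hT : G.IsTree) {a x u y : V} (h1 : Btw G a x u) (h2 : Btw G a u y) :
    Btw G a x y ∧ Btw G x u y := by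
  unfold Btw at *
  have t1 := hT.isConnected.dist_triangle (u := x) (v := u) (w := y)
  have t2 := hT.isConnected.dist_triangle (u := a) (v := x) (w := y)
  omega

-- collinear ordering
lemma btw_order (hT : G.IsTree) {a s u y : V} (h1 : Btw G a s y) (h2 : Btw G a u y)
    (hd : G.dist a s ≤ G.dist a u) : Btw G a s u ∧ Btw G s u y := by
  obtain ⟨x, hx, hxd⟩ := exists_point_btw hT a u (G.dist a s) hd
  have h3 : Btw G a x y ∧ Btw G x u y := btw_trans hT hx h2
  have : x = s := btw_unique hT h3.1 h1 hxd
  subst this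
  exact ⟨hx, h3.2⟩

-- step toward a farther collinear point is the same step
lemma stp_eq_of_btw (hT : G.IsTree) {a u y : V} (h : Btw G y u a) (hua : u ≠ a) :
    stp G a u = stp G a y := by
  have hya : a ≠ y := by
    intro he; subst he
    unfold Btw at h
    have h1 := dist_pos hT hua
    have h2 := SimpleGraph.dist_comm (G := G) (u := u) (v := a)
    have h3 := SimpleGraph.dist_self (G := G) (v := a)
    omega
  obtain ⟨hadj, hd⟩ := stp_spec hT hya
  set s := stp G a y with hs
  have e1 : G.dist a s = 1 := dist_eq_one_of_adj hT hadj
  have hb1 : Btw G a s y := by unfold Btw; omega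
  have hb2 : Btw G a u y := btw_comm h
  have hle : G.dist a s ≤ G.dist a u := by
    have := dist_pos hT (Ne.symm hua)
    omega
  have ho := (btw_order hT hb1 hb2 hle).1
  unfold Btw at ho
  exact (stp_unique hT (Ne.symm hua) hadj (by omega)).symm

-- T15: if a is strictly between, the two steps differ
lemma stp_ne_of_btw (hT : G.IsTree) {a y z : V} (h : Btw G y a z) (hy : y ≠ a) (hz : z ≠ a) :
    stp G a y ≠ stp G a z := by
  intro he
  obtain ⟨hadj1, hd1⟩ := stp_spec hT (Ne.symm hy)
  obtain ⟨hadj2, hd2⟩ := stp_spec hT (Ne.symm hz)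
  rw [he] at hd1
  set w := stp G a z
  unfold Btw at h
  have t1 := hT.isConnected.dist_triangle (u := y) (v := w) (w := z)
  have c1 := SimpleGraph.dist_comm (G := G) (u := y) (v := a)
  have c2 := SimpleGraph.dist_comm (G := G) (u := y) (v := w)
  omega

lemma isPath_append {u a v : V} {p : G.Walk u a} {q : G.Walk a v}
    (hp : p.IsPath) (hq : q.IsPath)
    (h : ∀ x, x ∈ p.support → x ∈ q.support → x = a) : (p.append q).IsPath := by
  rw [SimpleGraph.Walk.isPath_def, SimpleGraph.Walk.support_append, List.nodup_append]
  have hqs : q.support = a :: q.support.tail := SimpleGraph.Walk.support_eq_cons q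
  have hqn : q.support.Nodup := hq.support_nodup
  rw [hqs] at hqn
  simp only [List.nodup_cons] at hqn
  refine ⟨hp.support_nodup, hqn.2, ?_⟩
  intro x hxp y hxq hxy
  subst hxy
  have : x ∈ q.support := by rw [hqs]; exact List.mem_cons_of_mem _ hxq
  have := h x hxp this
  subst this
  exact hqn.1 hxq

-- K1: if the steps from a toward y and z differ, then a is between y and z
lemma btw_of_stp_ne (hT : G.IsTree) {a y z : V} (hy : y ≠ a) (hz : z ≠ a)
    (hne : stp G a y ≠ stp G a z) : Btw G y a z := by
  obtain ⟨p, hp, hpl⟩ := hT.isConnected.exists_path_of_dist y a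
  obtain ⟨q, hq, hql⟩ := hT.isConnected.exists_path_of_dist a z
  have hcommon : ∀ x, x ∈ p.support → x ∈ q.support → x = a := by
    intro x hxp hxq
    by_contra hxa
    have h1 : Btw G y x a := btw_of_mem_support hT p hp hxp
    have h2 : Btw G a x z := btw_of_mem_support hT q hq hxq
    have e1 : stp G a x = stp G a y := stp_eq_of_btw hT h1 hxa
    have e2 : stp G a x = stp G a z := stp_eq_of_btw hT (btw_comm h2) hxa
    exact hne (e1 ▸ e2)
  have hpath := isPath_append hp hq hcommon
  have hlen := path_length_eq hT _ hpath
  rw [SimpleGraph.Walk.length_append, hpl, hql] at hlen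
  exact hlen

lemma exists_median_aux (hT : G.IsTree) :
    ∀ n x y z, G.dist x y ≤ n → ∃ m : V, Btw G x m y ∧ Btw G x m z ∧ Btw G y m z := by
  intro n
  induction n with
  | zero =>
    intro x y z h
    have hxy : x = y := eq_of_dist_eq_zero hT (by omega)
    subst hxy
    exact ⟨x, btw_left G x x, btw_left G x z, btw_left G x z⟩
  | succ n ih =>
    intro x y z h
    by_cases hb : Btw G y x z
    · exact ⟨x, btw_comm (btw_right G y x), btw_left G x z, hb⟩
    · have hxy : y ≠ x := by
        intro he; subst he; exact hb (btw_left G y z)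
      have hxz : z ≠ x := by
        intro he; subst he; exact hb (btw_right G y z)
      have heq : stp G x y = stp G x z := by
        by_contra hne
        exact hb (btw_of_stp_ne hT hxy hxz hne)
      obtain ⟨hadj1, hd1⟩ := stp_spec hT (Ne.symm hxy)
      obtain ⟨hadj2, hd2⟩ := stp_spec hT (Ne.symm hxz)
      rw [heq] at hadj1 hd1
      set x' := stp G x z with hx'
      obtain ⟨m, hm1, hm2, hm3⟩ := ih x' y z (by omega)
      have e1 : G.dist x x' = 1 := dist_eq_one_of_adj hT hadj1
      refine ⟨m, ?_, ?_, hm3⟩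
      · unfold Btw at *
        have t1 := hT.isConnected.dist_triangle (u := x) (v := x') (w := m)
        have t2 := hT.isConnected.dist_triangle (u := x) (v := m) (w := y)
        omega
      · unfold Btw at *
        have t1 := hT.isConnected.dist_triangle (u := x) (v := x') (w := m)
        have t2 := hT.isConnected.dist_triangle (u := x) (v := m) (w := z)
        omega

lemma exists_median (hT : G.IsTree) (x y z : V) :
    ∃ m : V, Btw G x m y ∧ Btw G x m z ∧ Btw G y m z :=
  exists_median_aux hT (G.dist x y) x y z le_rfl


end MDimAux

namespace MDimAux
set_option linter.unusedSectionVars false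
variable {V : Type*} [DecidableEq V] [Fintype V] {G : SimpleGraph V}

lemma leaf_nbr {l : V} (hl : IsLeaf G l) : ∃ n, G.neighborSet l = {n} :=
  Set.ncard_eq_one.mp hl

lemma leaf_not_btw (hT : G.IsTree) {l a b : V} (hl : IsLeaf G l) (h : Btw G a l b)
    (ha : a ≠ l) (hb : b ≠ l) : False := by
  obtain ⟨n, hn⟩ := leaf_nbr hl
  have hne := stp_ne_of_btw hT h ha hb
  have h1 : stp G l a ∈ G.neighborSet l := stp_adj hT (Ne.symm ha)
  have h2 : stp G l b ∈ G.neighborSet l := stp_adj hT (Ne.symm hb)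
  rw [hn] at h1 h2
  exact hne (h1.trans h2.symm)

lemma major_of_three {m x y z : V} (hx : G.Adj m x) (hy : G.Adj m y) (hz : G.Adj m z)
    (hxy : x ≠ y) (hxz : x ≠ z) (hyz : y ≠ z) : IsMajor G m := by
  have hsub : {x, y, z} ⊆ G.neighborSet m := by
    intro w hw
    simp only [Set.mem_insert_iff, Set.mem_singleton_iff] at hw
    rcases hw with rfl | rfl | rfl <;> assumption
  have h3 : ({x, y, z} : Set V).ncard = 3 := by
    rw [Set.ncard_insert_of_notMem (by simp [hxy, hxz]),
      Set.ncard_insert_of_notMem (by simp [hyz]), Set.ncard_singleton]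
  have := Set.ncard_le_ncard hsub (Set.toFinite _)
  unfold IsMajor
  omega

lemma not_leaf_major {x : V} (hl : IsLeaf G x) (hm : IsMajor G x) : False := by
  unfold IsLeaf at hl; unfold IsMajor at hm; omega

lemma major_of_median (hT : G.IsTree) {x y z m : V} (h1 : Btw G x m y) (h2 : Btw G x m z)
    (h3 : Btw G y m z) (hx : x ≠ m) (hy : y ≠ m) (hz : z ≠ m) : IsMajor G m := by
  have d1 := stp_ne_of_btw hT h1 hx hy
  have d2 := stp_ne_of_btw hT h2 hx hz
  have d3 := stp_ne_of_btw hT h3 hy hz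
  exact major_of_three (stp_adj hT (Ne.symm hx)) (stp_adj hT (Ne.symm hy))
    (stp_adj hT (Ne.symm hz)) d1 d2 d3

lemma major_exists (hT : G.IsTree) (hnp : ¬ IsPathGraph G) : ∃ v, IsMajor G v := by
  unfold IsPathGraph at hnp
  push_neg at hnp
  obtain ⟨v, hv⟩ := hnp hT
  exact ⟨v, by unfold IsMajor; omega⟩

lemma anchor_package (hT : G.IsTree) (hnp : ¬ IsPathGraph G) {l : V} (hl : IsLeaf G l) :
    ∃ v, IsTerminalOf G l v ∧ (∀ x, Btw G l x v ∨ Btw G l v x) ∧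
      (∀ x, Btw G l x v → x ≠ v → ¬IsMajor G x) := by
  classical
  obtain ⟨w0, hw0⟩ := major_exists hT hnp
  obtain ⟨v, hvmem, hvmin⟩ := Finset.exists_min_image
    (Finset.univ.filter (fun w => IsMajor G w)) (fun w => G.dist l w)
    ⟨w0, by simp [hw0]⟩
  simp only [Finset.mem_filter, Finset.mem_univ, true_and] at hvmem
  have hvmin' : ∀ w, IsMajor G w → G.dist l v ≤ G.dist l w := by
    intro w hw
    exact hvmin w (by simp [hw])
  have hnomaj : ∀ x, Btw G l x v → x ≠ v → ¬IsMajor G x := by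
    intro x hbx hxv hmx
    have := hvmin' x hmx
    unfold Btw at hbx
    have := dist_pos hT hxv
    omega
  have hchain : ∀ x, Btw G l x v ∨ Btw G l v x := by
    intro x
    by_cases hxl : x = l
    · subst hxl; exact Or.inl (btw_left G x v)
    obtain ⟨m, hm1, hm2, hm3⟩ := exists_median hT l v x
    by_cases hmv : m = v
    · subst hmv; exact Or.inr hm2
    by_cases hmx : m = x
    · subst hmx; exact Or.inl hm1
    by_cases hml : m = l
    · subst hml
      exact absurd (leaf_not_btw hT hl hm3 (fun h => not_leaf_major hl (h ▸ hvmem)) hxl) id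
    · have hmaj : IsMajor G m := major_of_median hT hm1 hm2 hm3
        (fun h => hml h.symm) (fun h => hmv h.symm) (fun h => hmx h.symm)
      exact absurd hmaj (hnomaj m hm1 hmv)
  have hlv : l ≠ v := fun h => not_leaf_major (h ▸ hl) hvmem
  refine ⟨v, ⟨hl, hvmem, ?_⟩, hchain, hnomaj⟩
  intro w hw hwv
  rcases hchain w with hbw | hbw
  · exact absurd hw (hnomaj w hbw hwv)
  · unfold Btw at hbw
    have := dist_pos hT (Ne.symm hwv)
    omega

lemma terminal_unique {l v v' : V} (h : IsTerminalOf G l v) (h' : IsTerminalOf G l v') :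
    v = v' := by
  by_contra hne
  have h1 := h.2.2 v' h'.2.1 (Ne.symm hne)
  have h2 := h'.2.2 v h.2.1 hne
  omega

open Classical in
noncomputable def anchor (G : SimpleGraph V) (l : V) : V :=
  if h : ∃ v, IsTerminalOf G l v then h.choose else l

lemma anchor_props (hT : G.IsTree) (hnp : ¬ IsPathGraph G) {l : V} (hl : IsLeaf G l) :
    IsTerminalOf G l (anchor G l) ∧ (∀ x, Btw G l x (anchor G l) ∨ Btw G l (anchor G l) x) ∧
      (∀ x, Btw G l x (anchor G l) → x ≠ anchor G l → ¬IsMajor G x) := by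
  classical
  obtain ⟨v, h1, h2, h3⟩ := anchor_package hT hnp hl
  have hav : anchor G l = v := by
    rw [anchor]
    split
    · exact terminal_unique (Exists.choose_spec ‹_›) h1
    · exact absurd (⟨v, h1⟩ : ∃ w, IsTerminalOf G l w) ‹_›
  rw [hav]
  exact ⟨h1, h2, h3⟩

lemma terminal_iff_anchor (hT : G.IsTree) (hnp : ¬ IsPathGraph G) {l v : V} :
    IsTerminalOf G l v ↔ IsLeaf G l ∧ anchor G l = v := by
  constructor
  · intro h
    exact ⟨h.1, terminal_unique (anchor_props hT hnp h.1).1 h⟩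
  · rintro ⟨hl, rfl⟩
    exact (anchor_props hT hnp hl).1

lemma anchor_exterior (hT : G.IsTree) (hnp : ¬ IsPathGraph G) {l : V} (hl : IsLeaf G l) :
    IsExteriorMajor G (anchor G l) := by
  have h := (anchor_props hT hnp hl).1
  refine ⟨h.2.1, ?_⟩
  rw [terminalDegree, Set.ncard_pos (Set.toFinite _)]
  exact ⟨l, h⟩

lemma leaf_ne_anchor (hT : G.IsTree) (hnp : ¬ IsPathGraph G) {l : V} (hl : IsLeaf G l) :
    l ≠ anchor G l :=
  fun h => not_leaf_major hl (h ▸ (anchor_props hT hnp hl).1.2.1)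

-- T10 : beyond any a (as seen from b) there is a leaf
lemma exists_leaf_beyond (hT : G.IsTree) {a b : V} (h : a ≠ b) :
    ∃ l, IsLeaf G l ∧ Btw G b a l := by
  classical
  obtain ⟨l, hlmem, hlmax⟩ := Finset.exists_max_image
    (Finset.univ.filter (fun x => Btw G b a x)) (fun x => G.dist b x)
    ⟨a, by simp [btw_right]⟩
  simp only [Finset.mem_filter, Finset.mem_univ, true_and] at hlmem
  have hlb : l ≠ b := by
    intro he
    have hp := dist_pos hT (Ne.symm h)
    unfold Btw at hlmem
    rw [he] at hlmem
    have := SimpleGraph.dist_self (G := G) (v := b)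
    have := SimpleGraph.dist_comm (G := G) (u := a) (v := b)
    omega
  refine ⟨l, ?_, hlmem⟩
  obtain ⟨hadj, hd⟩ := stp_spec hT hlb
  have hset : G.neighborSet l = {stp G l b} := by
    apply Set.eq_of_subset_of_subset
    · intro y hy
      simp only [Set.mem_singleton_iff]
      by_contra hne
      have hyl : y ≠ l := fun he => G.irrefl (he ▸ hy)
      have hstpy : stp G l y = y :=
        (stp_unique hT (Ne.symm hyl) hy (by
          rw [SimpleGraph.dist_self, dist_eq_one_of_adj hT hy])).symm
      have hbtw : Btw G b l y := btw_of_stp_ne hT (Ne.symm hlb) hyl (by rw [hstpy]; exact Ne.symm hne)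
      have hylen := dist_eq_one_of_adj hT hy
      have hmem2 : Btw G b a y := by
        unfold Btw at *
        have t1 := hT.isConnected.dist_triangle (u := a) (v := l) (w := y)
        have t2 := hT.isConnected.dist_triangle (u := b) (v := a) (w := y)
        omega
      have := hlmax y (by simp [hmem2])
      unfold Btw at hbtw
      have := dist_pos hT hyl.symm
      omega
    · intro y hy
      simp only [Set.mem_singleton_iff] at hy
      exact hy ▸ hadj
  rw [IsLeaf, hset, Set.ncard_singleton]

-- the chosen removed terminal leaf of each exterior major vertex
open Classical in
noncomputable def pick (G : SimpleGraph V) (v : V) : V :=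
  if h : ∃ u, IsTerminalOf G u v then h.choose else v

lemma pick_terminal {v : V} (hv : IsExteriorMajor G v) : IsTerminalOf G (pick G v) v := by
  classical
  have h2 : ({u | IsTerminalOf G u v}).ncard ≠ 0 := by
    have := hv.2; rw [terminalDegree] at this; omega
  obtain ⟨u, hu⟩ := Set.nonempty_of_ncard_ne_zero h2
  rw [pick]
  split
  · exact Exists.choose_spec ‹_›
  · exact absurd (⟨u, hu⟩ : ∃ w, IsTerminalOf G w v) ‹_›

lemma pick_anchor (hT : G.IsTree) (hnp : ¬ IsPathGraph G) {v : V} (hv : IsExteriorMajor G v) :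
    IsLeaf G (pick G v) ∧ anchor G (pick G v) = v :=
  (terminal_iff_anchor hT hnp).mp (pick_terminal hv)

def SS (G : SimpleGraph V) : Set V := {u | IsLeaf G u} \ (pick G '' {v | IsExteriorMajor G v})

lemma removed_eq_pick (hT : G.IsTree) (hnp : ¬ IsPathGraph G) {l : V} (hl : IsLeaf G l)
    (h : l ∉ SS G) : l = pick G (anchor G l) := by
  rw [SS, Set.mem_diff] at h
  push_neg at h
  obtain ⟨w, hw, hwl⟩ := h hl
  have := (pick_anchor hT hnp hw).2
  rw [← hwl, this]

lemma removed_inj (hT : G.IsTree) (hnp : ¬ IsPathGraph G) {l l' : V} (hl : IsLeaf G l)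
    (hl' : IsLeaf G l') (h : l ∉ SS G) (h' : l' ∉ SS G) (ha : anchor G l = anchor G l') :
    l = l' := by
  rw [removed_eq_pick hT hnp hl h, removed_eq_pick hT hnp hl' h', ha]

lemma pick_injOn (hT : G.IsTree) (hnp : ¬ IsPathGraph G) :
    Set.InjOn (pick G) {v | IsExteriorMajor G v} := by
  intro v hv v' hv' he
  have h1 := (pick_anchor hT hnp hv).2
  have h2 := (pick_anchor hT hnp hv').2
  rw [← h1, ← h2, he]

lemma stp_of_adj_btw (hT : G.IsTree) {v y s : V} (hadj : G.Adj v y) (h : Btw G v y s) :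
    stp G v s = y ∧ s ≠ v := by
  have h1 := dist_eq_one_of_adj hT hadj
  unfold Btw at h
  have hsv : s ≠ v := by
    intro he
    rw [he] at h
    have := SimpleGraph.dist_self (G := G) (v := v)
    have := SimpleGraph.dist_comm (G := G) (u := v) (v := y)
    omega
  exact ⟨(stp_unique hT (Ne.symm hsv) hadj (by omega)).symm, hsv⟩

-- an extremal major vertex has at least two terminal leaves
lemma exists_two_terminals (hT : G.IsTree) (hnp : ¬ IsPathGraph G) {w1 v : V}
    (hw1 : IsMajor G w1) (hv : IsMajor G v) (hne : v ≠ w1)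
    (hmax : ∀ w, IsMajor G w → G.dist w1 w ≤ G.dist w1 v) :
    ∃ u u', IsTerminalOf G u v ∧ IsTerminalOf G u' v ∧ u ≠ u' := by
  set η := stp G v w1 with hη
  have hdir : ∀ w, IsMajor G w → w ≠ v → stp G v w = η := by
    intro w hw hwv
    by_contra hne2
    have hb : Btw G w v w1 := btw_of_stp_ne hT hwv (Ne.symm hne) hne2
    unfold Btw at hb
    have := hmax w hw
    have := dist_pos hT hwv
    have c1 := SimpleGraph.dist_comm (G := G) (u := w) (v := v)
    have c2 := SimpleGraph.dist_comm (G := G) (u := w) (v := w1)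
    have c3 := SimpleGraph.dist_comm (G := G) (u := v) (v := w1)
    omega
  have hηmem : η ∈ G.neighborSet v := stp_adj hT hne
  have hcard : 2 ≤ (G.neighborSet v \ {η}).ncard := by
    have h1 : 3 ≤ (G.neighborSet v).ncard := hv
    have h2 := Set.ncard_diff_singleton_add_one hηmem (Set.toFinite _)
    omega
  obtain ⟨y1, y2, hy1, hy2, hy12⟩ := (Set.one_lt_ncard_iff (s := G.neighborSet v \ {η}) (Set.toFinite _)).mp (by omega)
  have hterm : ∀ y, y ∈ G.neighborSet v \ {η} → ∃ s, IsTerminalOf G s v ∧ stp G v s = y := by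
    rintro y ⟨hyadj, hyη⟩
    simp only [Set.mem_singleton_iff] at hyη
    have hyv : y ≠ v := fun he => G.irrefl (he ▸ hyadj)
    obtain ⟨s, hs, hbs⟩ := exists_leaf_beyond hT hyv
    obtain ⟨hstp, hsv⟩ := stp_of_adj_btw hT hyadj hbs
    refine ⟨s, ?_, hstp⟩
    rw [terminal_iff_anchor hT hnp]
    refine ⟨hs, ?_⟩
    by_contra hav
    have hmaj : IsMajor G (anchor G s) := (anchor_props hT hnp hs).1.2.1
    have hstrict := (anchor_props hT hnp hs).1.2.2 v hv (Ne.symm hav)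
    have hbw : Btw G s v (anchor G s) := by
      apply btw_of_stp_ne hT hsv (fun he => hav (he ▸ rfl))
      rw [hstp, hdir _ hmaj hav]
      exact hyη
    unfold Btw at hbw
    have := dist_pos hT (fun he => hav he.symm)
    omega
  obtain ⟨s1, hs1, he1⟩ := hterm y1 hy1
  obtain ⟨s2, hs2, he2⟩ := hterm y2 hy2
  exact ⟨s1, s2, hs1, hs2, fun he => hy12 (by rw [← he1, ← he2, he])⟩

lemma exists_three_terminals (hT : G.IsTree) (hnp : ¬ IsPathGraph G) {v : V}
    (hv : IsMajor G v) (honly : ∀ w, IsMajor G w → w = v) :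
    ∃ u1 u2 u3, IsTerminalOf G u1 v ∧ IsTerminalOf G u2 v ∧ IsTerminalOf G u3 v ∧
      u1 ≠ u2 ∧ u1 ≠ u3 ∧ u2 ≠ u3 := by
  have h3 : 3 ≤ (G.neighborSet v).ncard := hv
  obtain ⟨t, hts, htcard⟩ := Set.exists_subset_card_eq h3
  obtain ⟨y1, y2, y3, h12, h13, h23, rfl⟩ := Set.ncard_eq_three.mp htcard
  have hterm : ∀ y, y ∈ G.neighborSet v → ∃ s, IsTerminalOf G s v ∧ stp G v s = y := by
    intro y hyadj
    have hyv : y ≠ v := fun he => G.irrefl (he ▸ hyadj)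
    obtain ⟨s, hs, hbs⟩ := exists_leaf_beyond hT hyv
    obtain ⟨hstp, hsv⟩ := stp_of_adj_btw hT hyadj hbs
    refine ⟨s, ?_, hstp⟩
    rw [terminal_iff_anchor hT hnp]
    exact ⟨hs, honly _ (anchor_props hT hnp hs).1.2.1⟩
  obtain ⟨s1, hs1, he1⟩ := hterm y1 (hts (by simp))
  obtain ⟨s2, hs2, he2⟩ := hterm y2 (hts (by simp))
  obtain ⟨s3, hs3, he3⟩ := hterm y3 (hts (by simp))
  exact ⟨s1, s2, s3, hs1, hs2, hs3,
    fun he => h12 (by rw [← he1, ← he2, he]),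
    fun he => h13 (by rw [← he1, ← he3, he]),
    fun he => h23 (by rw [← he2, ← he3, he])⟩

lemma pick_image_subset (hT : G.IsTree) (hnp : ¬ IsPathGraph G) :
    pick G '' {v | IsExteriorMajor G v} ⊆ {u | IsLeaf G u} := by
  rintro _ ⟨v, hv, rfl⟩
  exact (pick_anchor hT hnp hv).1

lemma n2 (hT : G.IsTree) (hnp : ¬ IsPathGraph G) :
    numExteriorMajor G + 2 ≤ numLeaves G := by
  classical
  rw [numLeaves, numExteriorMajor]
  have hpickcard : (pick G '' {v | IsExteriorMajor G v}).ncard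
      = ({v | IsExteriorMajor G v} : Set V).ncard :=
    Set.ncard_image_of_injOn (pick_injOn hT hnp)
  by_cases hsing : ∀ w, IsMajor G w → ∀ w', IsMajor G w' → w = w'
  · -- single major vertex
    obtain ⟨v, hv⟩ := major_exists hT hnp
    obtain ⟨u1, u2, u3, h1, h2, h3, h12, h13, h23⟩ :=
      exists_three_terminals hT hnp hv (fun w hw => hsing w hw v hv)
    have hEx : {v' | IsExteriorMajor G v'} = {v} := by
      apply Set.eq_of_subset_of_subset
      · intro w hw; exact hsing w hw.1 v hv
      · rintro w (rfl : w = v)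
        refine ⟨hv, ?_⟩
        rw [terminalDegree, Set.ncard_pos (Set.toFinite _)]
        exact ⟨u1, h1⟩
    have hsub : {u1, u2, u3} ⊆ {u | IsLeaf G u} := by
      intro w hw
      simp only [Set.mem_insert_iff, Set.mem_singleton_iff] at hw
      rcases hw with rfl | rfl | rfl
      exacts [h1.1, h2.1, h3.1]
    have hc3 : ({u1, u2, u3} : Set V).ncard = 3 := by
      rw [Set.ncard_insert_of_notMem (by simp [h12, h13]),
        Set.ncard_insert_of_notMem (by simp [h23]), Set.ncard_singleton]
    have := Set.ncard_le_ncard hsub (Set.toFinite _)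
    rw [hEx, Set.ncard_singleton]
    omega
  · push_neg at hsing
    obtain ⟨w1, hw1, w2, hw2, hww⟩ := hsing
    have hgrab : ∀ z, IsMajor G z → (∃ w', IsMajor G w' ∧ w' ≠ z) →
        ∃ v s, IsTerminalOf G s v ∧ s ≠ pick G v ∧ anchor G s = v ∧ v ≠ z := by
      intro z hz ⟨wo, hwo, hwoz⟩
      obtain ⟨v, hvmem, hvmax⟩ := Finset.exists_max_image
        (Finset.univ.filter (fun w => IsMajor G w)) (fun w => G.dist z w)
        ⟨wo, by simp [hwo]⟩
      simp only [Finset.mem_filter, Finset.mem_univ, true_and] at hvmem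
      have hvz : v ≠ z := by
        intro he
        have h1 := hvmax wo (by simp [hwo])
        have h2 := dist_pos hT (Ne.symm hwoz)
        rw [he] at h1
        have hzz := SimpleGraph.dist_self (G := G) (v := z)
        have hc := SimpleGraph.dist_comm (G := G) (u := wo) (v := z)
        omega
      obtain ⟨u, u', hu, hu', huu⟩ := exists_two_terminals hT hnp hz hvmem hvz
        (fun w hw => hvmax w (by simp [hw]))
      by_cases hup : u = pick G v
      · exact ⟨v, u', hu', fun he => huu (by rw [hup, he]),
          ((terminal_iff_anchor hT hnp).mp hu').2, hvz⟩
      · exact ⟨v, u, hu, hup, ((terminal_iff_anchor hT hnp).mp hu).2, hvz⟩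
    obtain ⟨v1, s1, hs1, hs1p, hs1a, -⟩ := hgrab w1 hw1 ⟨w2, hw2, hww.symm⟩
    obtain ⟨v2, s2, hs2, hs2p, hs2a, hv21⟩ := hgrab v1 hs1.2.1 (by
      by_cases h : w1 = v1
      · exact ⟨w2, hw2, fun he => hww (h ▸ he ▸ rfl)⟩
      · exact ⟨w1, hw1, h⟩)
    set R := pick G '' {v | IsExteriorMajor G v} with hR
    have hnotmem : ∀ (s v : V), IsTerminalOf G s v → s ≠ pick G v → anchor G s = v → s ∉ R := by
      intro s v hsv hsp hsa hmem
      obtain ⟨w, hw, hws⟩ := hmem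
      have := (pick_anchor hT hnp hw).2
      rw [← hws, this] at hsa
      exact hsp (by rw [← hws, hsa])
    have hm1 : s1 ∉ R := hnotmem s1 v1 hs1 hs1p hs1a
    have hm2 : s2 ∉ R := hnotmem s2 v2 hs2 hs2p hs2a
    have hs12 : s1 ≠ s2 := fun he => hv21 (by rw [← hs2a, ← he, hs1a])
    have hsub : insert s1 (insert s2 R) ⊆ {u | IsLeaf G u} := by
      intro w hw
      rcases hw with rfl | hw
      · exact hs1.1
      rcases hw with rfl | hw
      · exact hs2.1
      · exact pick_image_subset hT hnp hw
    have hc1 : (insert s1 (insert s2 R)).ncard = R.ncard + 2 := by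
      rw [Set.ncard_insert_of_notMem (by simp [hs12, hm1]) (Set.toFinite _),
        Set.ncard_insert_of_notMem hm2 (Set.toFinite _)]
    have := Set.ncard_le_ncard hsub (Set.toFinite _)
    omega
def Leg (G : SimpleGraph V) (l : V) : Set V :=
  {x | Btw G l x (anchor G l) ∧ x ≠ anchor G l}

lemma btw_anchor_of_ne (hT : G.IsTree) (hnp : ¬ IsPathGraph G) {l x : V} (hl : IsLeaf G l)
    (hx : x ≠ l) (hleg : x ∉ Leg G l) : Btw G l (anchor G l) x := by
  rcases (anchor_props hT hnp hl).2.1 x with hb | hb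
  · by_cases hxa : x = anchor G l
    · subst hxa; exact btw_right G l (anchor G l)
    · exact absurd ⟨hb, hxa⟩ hleg
  · exact hb

lemma leaf_btw_anchor (hT : G.IsTree) (hnp : ¬ IsPathGraph G) {l l' : V} (hl : IsLeaf G l)
    (hl' : IsLeaf G l') (hne : l' ≠ l) : Btw G l (anchor G l) l' := by
  apply btw_anchor_of_ne hT hnp hl hne
  rintro ⟨hb, hba⟩
  have hlv : l' ≠ anchor G l := hba
  exact leaf_not_btw hT hl' hb (Ne.symm hne) (Ne.symm hlv)

lemma legs_disjoint (hT : G.IsTree) (hnp : ¬ IsPathGraph G) {l l' x : V} (hl : IsLeaf G l)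
    (hl' : IsLeaf G l') (hne : l ≠ l') (h : x ∈ Leg G l) (h' : x ∈ Leg G l') : False := by
  obtain ⟨hb, hxv⟩ := h
  obtain ⟨hb', hxv'⟩ := h'
  set v := anchor G l
  set v' := anchor G l'
  have hbl : Btw G l v l' := leaf_btw_anchor hT hnp hl hl' (Ne.symm hne)
  by_cases hvv : v = v'
  · unfold Btw at hb hb' hbl
    rw [← hvv] at hb'
    have t1 := hT.isConnected.dist_triangle (u := l) (v := x) (w := l')
    have c1 := SimpleGraph.dist_comm (G := G) (u := x) (v := l')
    have c2 := SimpleGraph.dist_comm (G := G) (u := v) (v := l')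
    have hp := dist_pos hT hxv
    omega
  · have hstrict : G.dist l' v' < G.dist l' v :=
      (anchor_props hT hnp hl').1.2.2 v (anchor_props hT hnp hl).1.2.1 hvv
    have hxl : Btw G x v l' := (btw_trans hT hb hbl).2
    unfold Btw at hxl hb'
    have c1 := SimpleGraph.dist_comm (G := G) (u := x) (v := l')
    have c2 := SimpleGraph.dist_comm (G := G) (u := v) (v := l')
    have hp := dist_pos hT hxv
    omega

lemma pair_lemma (hT : G.IsTree) (hnp : ¬ IsPathGraph G) {W : Set V} (hW : IsResolvingSet G W)
    {l l' : V} (hl : IsLeaf G l) (hl' : IsLeaf G l') (hne : l ≠ l')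
    (ha : anchor G l = anchor G l') (h : W ∩ Leg G l = ∅) (h' : W ∩ Leg G l' = ∅) : False := by
  have hlv : l ≠ anchor G l := leaf_ne_anchor hT hnp hl
  have hlv' : l' ≠ anchor G l := ha ▸ leaf_ne_anchor hT hnp hl'
  have hd1 : 1 ≤ G.dist l (anchor G l) := dist_pos hT hlv
  have hd2 : 1 ≤ G.dist l' (anchor G l) := dist_pos hT hlv'
  obtain ⟨x, hxb, hxd⟩ := exists_point_btw hT l (anchor G l) (G.dist l (anchor G l) - 1)
    (by omega)
  obtain ⟨x', hxb', hxd'⟩ := exists_point_btw hT l' (anchor G l) (G.dist l' (anchor G l) - 1)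
    (by omega)
  have hxv : x ≠ anchor G l := fun he => by rw [he] at hxd; omega
  have hxv' : x' ≠ anchor G l := fun he => by rw [he] at hxd'; omega
  have hdxv : G.dist x (anchor G l) = 1 := by unfold Btw at hxb; omega
  have hdxv' : G.dist x' (anchor G l) = 1 := by unfold Btw at hxb'; omega
  have hxleg : x ∈ Leg G l := ⟨hxb, hxv⟩
  have hxleg' : x' ∈ Leg G l' := ⟨by rw [← ha]; exact hxb', by rw [← ha]; exact hxv'⟩
  have hxx : x ≠ x' := fun he =>
    legs_disjoint hT hnp hl hl' hne hxleg (he ▸ hxleg')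
  apply hxx
  apply hW
  intro w hw
  have hwl : w ∉ Leg G l := fun hmem => (Set.eq_empty_iff_forall_notMem.mp h w) ⟨hw, hmem⟩
  have hwl' : w ∉ Leg G l' := fun hmem => (Set.eq_empty_iff_forall_notMem.mp h' w) ⟨hw, hmem⟩
  by_cases hwv : w = anchor G l
  · rw [hwv, hdxv, hdxv']
  · by_cases hwleaf : w = l
    · refine absurd ?_ hwl
      rw [hwleaf]
      exact ⟨btw_left G l (anchor G l), hlv⟩
    · have hbw : Btw G l (anchor G l) w := by
        rcases (anchor_props hT hnp hl).2.1 w with hb | hb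
        · exact absurd ⟨hb, hwv⟩ hwl
        · exact hb
      have hbw' : Btw G l' (anchor G l) w := by
        rcases (anchor_props hT hnp hl').2.1 w with hb | hb
        · by_cases hwleaf' : w = l'
          · refine absurd ?_ hwl'
            rw [hwleaf']
            exact ⟨btw_left G l' (anchor G l'), leaf_ne_anchor hT hnp hl'⟩
          · refine absurd ?_ hwl'
            refine ⟨hb, ?_⟩
            rw [← ha]
            exact hwv
        · rw [← ha] at hb
          exact hb
      have h1 : Btw G x (anchor G l) w := (btw_trans hT hxb hbw).2
      have h2 : Btw G x' (anchor G l) w := (btw_trans hT hxb' hbw').2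
      unfold Btw at h1 h2
      omega

lemma lower_bound (hT : G.IsTree) (hnp : ¬ IsPathGraph G) {W : Set V}
    (hW : IsResolvingSet G W) : numLeaves G ≤ W.ncard + numExteriorMajor G := by
  classical
  set Good : Set V := {l | IsLeaf G l ∧ (W ∩ Leg G l).Nonempty} with hGood
  set Bad : Set V := {l | IsLeaf G l ∧ ¬(W ∩ Leg G l).Nonempty} with hBad
  have hcover : {u | IsLeaf G u} ⊆ Good ∪ Bad := by
    intro u hu
    by_cases h : (W ∩ Leg G u).Nonempty
    · exact Or.inl ⟨hu, h⟩
    · exact Or.inr ⟨hu, h⟩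
  have hGW : Good.ncard ≤ W.ncard := by
    set f : V → V := fun l => if h : (W ∩ Leg G l).Nonempty then h.some else l with hf
    have hfmem : ∀ l, l ∈ Good → f l ∈ W ∩ Leg G l := by
      intro l hl
      simp only [hf, dif_pos hl.2]
      exact hl.2.some_mem
    apply Set.ncard_le_ncard_of_injOn f (fun l hl => (hfmem l hl).1) ?_ (Set.toFinite _)
    intro l hlG l' hlG' he
    by_contra hne
    exact legs_disjoint hT hnp hlG.1 hlG'.1 hne (hfmem l hlG).2 (he ▸ (hfmem l' hlG').2)
  have hBE : Bad.ncard ≤ numExteriorMajor G := by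
    rw [numExteriorMajor]
    apply Set.ncard_le_ncard_of_injOn (anchor G) ?_ ?_ (Set.toFinite _)
    · intro l hl
      exact anchor_exterior hT hnp hl.1
    · intro l hlB l' hlB' he
      by_contra hne
      exact pair_lemma hT hnp hW hlB.1 hlB'.1 hne he
        (Set.not_nonempty_iff_eq_empty.mp hlB.2)
        (Set.not_nonempty_iff_eq_empty.mp hlB'.2)
  have h1 : numLeaves G ≤ (Good ∪ Bad).ncard :=
    Set.ncard_le_ncard hcover (Set.toFinite _)
  have h2 := Set.ncard_union_le Good Bad
  omega

lemma branch_lemma (hT : G.IsTree) (hnp : ¬ IsPathGraph G) {c α β : V}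
    (hadjα : G.Adj c α) (hadjβ : G.Adj c β) (hαβ : α ≠ β)
    (hRem : ∀ s, IsLeaf G s → s ≠ c → (stp G c s = α ∨ stp G c s = β) → s ∉ SS G)
    (hEx : ∃ s, IsLeaf G s ∧ s ∈ SS G) (hcnl : ¬ IsLeaf G c) :
    ∃ l, IsLeaf G l ∧ l ≠ c ∧ stp G c l = α ∧ anchor G l = c := by
  classical
  have hcmaj : ∀ γ, G.Adj c γ → γ ≠ α → γ ≠ β → IsMajor G c :=
    fun γ hγ h1 h2 => major_of_three hadjα hadjβ hγ hαβ (Ne.symm h1) (Ne.symm h2)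
  -- the α-branch contains a leaf
  have hX : ∃ l, IsLeaf G l ∧ l ≠ c ∧ stp G c l = α := by
    obtain ⟨l, hl, hbl⟩ := exists_leaf_beyond hT (G.ne_of_adj hadjα).symm
    obtain ⟨h1, h2⟩ := stp_of_adj_btw hT hadjα hbl
    exact ⟨l, hl, h2, h1⟩
  obtain ⟨l, hlmem, hlmax⟩ := Finset.exists_max_image
    (Finset.univ.filter (fun s => IsLeaf G s ∧ s ≠ c ∧ stp G c s = α))
    (fun s => G.dist c (anchor G s)) (by
      obtain ⟨l, h1, h2, h3⟩ := hX
      exact ⟨l, by simp [h1, h2, h3]⟩)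
  simp only [Finset.mem_filter, Finset.mem_univ, true_and] at hlmem
  obtain ⟨hl, hlc, hlα⟩ := hlmem
  have hlmax' : ∀ s, IsLeaf G s → s ≠ c → stp G c s = α →
      G.dist c (anchor G s) ≤ G.dist c (anchor G l) := by
    intro s h1 h2 h3
    exact hlmax s (by simp [h1, h2, h3])
  obtain ⟨hterm, hchain, hnomaj⟩ := anchor_props hT hnp hl
  have hlv : l ≠ anchor G l := leaf_ne_anchor hT hnp hl
  have hvmaj : IsMajor G (anchor G l) := hterm.2.1
  rcases hchain c with hbc | hbc
  · -- c is on the leg of l (or equals the anchor)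
    by_cases hcv : c = anchor G l
    · exact ⟨l, hl, hlc, hlα, hcv.symm⟩
    · -- c is interior to the leg : then every leaf is removed, contradiction
      exfalso
      have hcnmaj : ¬ IsMajor G c := hnomaj c hbc hcv
      have hstpne : stp G c l ≠ stp G c (anchor G l) :=
        stp_ne_of_btw hT hbc hlc (fun h => hcv h.symm)
      have hstpv : stp G c (anchor G l) = β := by
        by_contra hne
        refine hcnmaj (hcmaj (stp G c (anchor G l)) (stp_adj hT hcv) ?_ hne)
        rw [← hlα]
        exact fun h => hstpne h.symm
      obtain ⟨s, hs, hsS⟩ := hEx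
      by_cases hsl : s = l
      · exact hRem l hl hlc (Or.inl hlα) (hsl ▸ hsS)
      · have hsc : s ≠ c := fun h => hcnl (h ▸ hs)
        have hbls : Btw G l (anchor G l) s := leaf_btw_anchor hT hnp hl hs hsl
        have hcvs : Btw G c (anchor G l) s := (btw_trans hT hbc hbls).2
        have : stp G c s = β := by
          rw [← hstpv]
          exact (stp_eq_of_btw hT (btw_comm hcvs) (fun h => hcv h.symm)).symm
        exact hRem s hs hsc (Or.inr this) hsS
  · -- the anchor is between l and c
    by_cases hcv : anchor G l = c
    · exact ⟨l, hl, hlc, hlα, hcv⟩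
    · -- v ≠ c
      have hstpcv : stp G c (anchor G l) = α := by
        rw [← hlα]
        exact stp_eq_of_btw hT hbc hcv
      by_cases hter : ∃ u, IsTerminalOf G u (anchor G l) ∧ u ≠ l
      · exfalso
        obtain ⟨u, hu, hul⟩ := hter
        have huleaf : IsLeaf G u := hu.1
        have huanchor : anchor G u = anchor G l := ((terminal_iff_anchor hT hnp).mp hu).2
        have huc : u ≠ c := fun h => hcnl (h ▸ huleaf)
        have hreml : l ∉ SS G := hRem l hl hlc (Or.inl hlα)
        obtain ⟨hterm', hchain', hnomaj'⟩ := anchor_props hT hnp huleaf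
        rw [huanchor] at hchain' hnomaj'
        rcases hchain' c with hbuc | hbuc
        · -- c interior to u's leg
          have hcnmaj : ¬ IsMajor G c := hnomaj' c hbuc (fun h => hcv h.symm)
          have hstpne : stp G c u ≠ stp G c (anchor G l) :=
            stp_ne_of_btw hT hbuc huc hcv
          have hstpu : stp G c u = β := by
            by_contra hne
            refine hcnmaj (hcmaj (stp G c u) (stp_adj hT (Ne.symm huc)) ?_ hne)
            rw [← hstpcv]
            exact hstpne
          have hremu : u ∉ SS G := hRem u huleaf huc (Or.inr hstpu)
          exact hul (removed_inj hT hnp huleaf hl hremu hreml (huanchor.trans rfl))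
        · -- u is also in the α branch
          have hstpu : stp G c u = α := by
            rw [← hstpcv]
            exact (stp_eq_of_btw hT hbuc hcv).symm
          have hremu : u ∉ SS G := hRem u huleaf huc (Or.inl hstpu)
          exact hul (removed_inj hT hnp huleaf hl hremu hreml (huanchor.trans rfl))
      · -- anchor G l has no other terminal leaf : find a deeper branch, contradict maximality
        exfalso
        push_neg at hter
        have hs1s2 : stp G (anchor G l) l ≠ stp G (anchor G l) c :=
          stp_ne_of_btw hT hbc hlv (fun h => hcv h.symm)
        have hy : ∃ y, y ∈ G.neighborSet (anchor G l) ∧ y ≠ stp G (anchor G l) l ∧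
            y ≠ stp G (anchor G l) c := by
          by_contra hny
          push_neg at hny
          have hsub : G.neighborSet (anchor G l) ⊆
              {stp G (anchor G l) l, stp G (anchor G l) c} := by
            intro y hy
            by_cases h1 : y = stp G (anchor G l) l
            · exact Or.inl h1
            · exact Or.inr (hny y hy h1)
          have := Set.ncard_le_ncard hsub (Set.toFinite _)
          have h2 : ({stp G (anchor G l) l, stp G (anchor G l) c} : Set V).ncard ≤ 2 := by
            apply le_trans (Set.ncard_insert_le _ _)
            rw [Set.ncard_singleton]
          have h3 : 3 ≤ (G.neighborSet (anchor G l)).ncard := hvmaj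
          omega
        obtain ⟨y, hyadj, hy1, hy2⟩ := hy
        have hyv : y ≠ anchor G l := fun h => G.irrefl (h ▸ hyadj)
        obtain ⟨s, hs, hbs⟩ := exists_leaf_beyond hT hyv
        obtain ⟨hstps, hsv⟩ := stp_of_adj_btw hT hyadj hbs
        have hbsvc : Btw G s (anchor G l) c :=
          btw_of_stp_ne hT hsv (Ne.symm hcv) (by rw [hstps]; exact hy2)
        have hstpcs : stp G c s = α := by
          rw [← hstpcv]
          exact (stp_eq_of_btw hT (btw_comm (btw_comm hbsvc)) hcv).symm
        have hsc : s ≠ c := fun h => hcnl (h ▸ hs)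
        have hwv : anchor G s ≠ anchor G l := by
          intro h
          have : IsTerminalOf G s (anchor G l) := (terminal_iff_anchor hT hnp).mpr ⟨hs, h⟩
          have := hter s this
          rw [this] at hstps
          exact hy1 hstps.symm
        have hbswv : Btw G s (anchor G s) (anchor G l) := by
          obtain ⟨hterm'', hchain'', hnomaj''⟩ := anchor_props hT hnp hs
          rcases hchain'' (anchor G l) with hb | hb
          · exact absurd hvmaj (hnomaj'' (anchor G l) hb (Ne.symm hwv))
          · exact hb
        have hwc : Btw G (anchor G s) (anchor G l) c := (btw_trans hT hbswv hbsvc).2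
        have hmax := hlmax' s hs hsc hstpcs
        unfold Btw at hwc
        have c1 := SimpleGraph.dist_comm (G := G) (u := anchor G s) (v := c)
        have c2 := SimpleGraph.dist_comm (G := G) (u := anchor G l) (v := c)
        have c3 := SimpleGraph.dist_comm (G := G) (u := anchor G s) (v := anchor G l)
        have := dist_pos hT (fun h => hwv h.symm)
        omega

lemma SS_ncard (hT : G.IsTree) (hnp : ¬ IsPathGraph G) :
    (SS G).ncard = numLeaves G - numExteriorMajor G := by
  rw [SS, Set.ncard_diff (pick_image_subset hT hnp) (Set.toFinite _),
    Set.ncard_image_of_injOn (pick_injOn hT hnp), numLeaves, numExteriorMajor]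

lemma SS_resolving (hT : G.IsTree) (hnp : ¬ IsPathGraph G) :
    IsResolvingSet G (SS G) := by
  classical
  intro a b hab
  by_contra hne
  have hyp : ∀ s ∈ SS G, G.dist s a = G.dist s b := by
    intro s hs
    have := hab s hs
    have c1 := SimpleGraph.dist_comm (G := G) (u := a) (v := s)
    have c2 := SimpleGraph.dist_comm (G := G) (u := b) (v := s)
    omega
  have hSleaf : ∀ s ∈ SS G, IsLeaf G s := fun s hs => hs.1
  have hSne : (SS G).Nonempty := by
    rw [← Set.ncard_pos (Set.toFinite _), SS_ncard hT hnp]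
    have := n2 hT hnp
    omega
  obtain ⟨s0, hs0⟩ := hSne
  obtain ⟨c, hc1, hc2, hc3⟩ := exists_median hT s0 a b
  have hcab : G.dist c a = G.dist c b := by
    have := hyp s0 hs0
    unfold Btw at hc1 hc2
    omega
  have hca : c ≠ a := by
    intro h
    apply hne
    apply eq_of_dist_eq_zero hT
    rw [← h, ← hcab, h, SimpleGraph.dist_self]
  have hcb : c ≠ b := by
    intro h
    apply hne
    apply eq_of_dist_eq_zero hT
    have : G.dist c a = 0 := by rw [hcab, h, SimpleGraph.dist_self]
    have c1 := SimpleGraph.dist_comm (G := G) (u := a) (v := c)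
    have c2 := SimpleGraph.dist_comm (G := G) (u := a) (v := b)
    unfold Btw at hc3
    omega
  have hacb : Btw G a c b := hc3
  have hS : ∀ s ∈ SS G, Btw G s c a ∧ Btw G s c b := by
    intro s hs
    obtain ⟨m, hm1, hm2, hm3⟩ := exists_median hT s a b
    have hmc : m = c := by
      apply btw_unique hT (btw_comm hm3) (btw_comm hacb)
      have := hyp s hs
      unfold Btw at hm1 hm2 hm3 hacb
      have c1 := SimpleGraph.dist_comm (G := G) (u := a) (v := m)
      have c2 := SimpleGraph.dist_comm (G := G) (u := a) (v := c)
      have c3 := SimpleGraph.dist_comm (G := G) (u := b) (v := m)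
      have c4 := SimpleGraph.dist_comm (G := G) (u := b) (v := c)
      omega
    rw [← hmc]
    exact ⟨hm1, hm2⟩
  have hcnl : ¬ IsLeaf G c := fun hcl => leaf_not_btw hT hcl hacb (Ne.symm hca) (Ne.symm hcb)
  have hαβ : stp G c a ≠ stp G c b := stp_ne_of_btw hT hacb (Ne.symm hca) (Ne.symm hcb)
  have hadjα : G.Adj c (stp G c a) := stp_adj hT hca
  have hadjβ : G.Adj c (stp G c b) := stp_adj hT hcb
  have hRem : ∀ s, IsLeaf G s → s ≠ c →
      (stp G c s = stp G c a ∨ stp G c s = stp G c b) → s ∉ SS G := by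
    intro s hsleaf hsc hd hsS
    obtain ⟨h1, h2⟩ := hS s hsS
    rcases hd with hd | hd
    · exact stp_ne_of_btw hT h1 hsc (Ne.symm hca) hd
    · exact stp_ne_of_btw hT h2 hsc (Ne.symm hcb) hd
  have hEx : ∃ s, IsLeaf G s ∧ s ∈ SS G := ⟨s0, hs0.1, hs0⟩
  obtain ⟨l, hl, hlc, hlα, hla⟩ := branch_lemma hT hnp hadjα hadjβ hαβ hRem hEx hcnl
  obtain ⟨l', hl', hlc', hlβ, hla'⟩ := branch_lemma hT hnp hadjβ hadjα (Ne.symm hαβ)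
    (fun s h1 h2 h3 => hRem s h1 h2 h3.symm) hEx hcnl
  have hll : l ≠ l' := by
    intro h
    rw [h, hlβ] at hlα
    exact hαβ hlα.symm
  exact hll (removed_inj hT hnp hl hl'
    (hRem l hl hlc (Or.inl hlα)) (hRem l' hl' hlc' (Or.inr hlβ))
    (hla.trans hla'.symm))

end MDimAux

/-- For a tree that is not a path, `dim(T) = n₁(T) - ex(T)`. -/
theorem metricDim_tree_eq {V : Type*} [Fintype V] (G : SimpleGraph V)
    (hT : G.IsTree) (hnp : ¬ IsPathGraph G) :
    metricDim G = numLeaves G - numExteriorMajor G := by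
  classical
  have hmem : numLeaves G - numExteriorMajor G ∈
      {k | ∃ S : Set V, S.ncard = k ∧ IsResolvingSet G S} :=
    ⟨MDimAux.SS G, MDimAux.SS_ncard hT hnp, MDimAux.SS_resolving hT hnp⟩
  rw [metricDim]
  apply le_antisymm
  · exact Nat.sInf_le hmem
  · apply le_csInf ⟨_, hmem⟩
    rintro k ⟨W, rfl, hres⟩
    have := MDimAux.lower_bound hT hnp hres
    omega
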